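/- Let μ and ν be Borel probability measures with finite first moments on a complete separable metric space (X, d), and let ℱ be the family of all 1-Lipschitz functions f : X → ℝ. Then the integral probability metric induced by ℱ equals the 1-Wasserstein distance: sup_{f 1-Lipschitz} | ∫ f dμ − ∫ f dν | = W(μ, ν) (Kantorovich–Rubinstein duality). -/

import Mathlib

open MeasureTheory

/-- The 1-Wasserstein distance: the infimum over couplings `π` of `μ` and `ν`
of the transport cost `∫ d(x,y) dπ(x,y)`. -/
noncomputable def wassersteinDist {X : Type*} [MetricSpace X] [MeasurableSpace X]
    (μ ν : Measure X) : ℝ :=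
  sInf {c : ℝ | ∃ π : Measure (X × X), IsProbabilityMeasure π ∧
    π.map Prod.fst = μ ∧ π.map Prod.snd = ν ∧ c = ∫ p, dist p.1 p.2 ∂π}

/-- A Borel probability measure has finite first moment if `∫ d(x₀, x) dμ(x) < ∞`
for some point `x₀`. -/
def HasFiniteFirstMoment {X : Type*} [MetricSpace X] [MeasurableSpace X]
    (μ : Measure X) : Prop :=
  ∃ x₀ : X, Integrable (fun x => dist x₀ x) μ

section Aux

open Set Filter Topology
open scoped ENNReal

variable {X : Type*} [MetricSpace X] [MeasurableSpace X] [BorelSpace X]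

lemma KRaux.dist_integrable (μ : Measure X) [IsProbabilityMeasure μ]
    (hμ : HasFiniteFirstMoment μ) (y : X) : Integrable (fun x => dist x y) μ := by
  obtain ⟨x₀, h0⟩ := hμ
  have hm : AEStronglyMeasurable (fun x => dist x y) μ :=
    (Continuous.dist continuous_id continuous_const).aestronglyMeasurable
  refine (h0.add (integrable_const (dist x₀ y))).mono' hm ?_
  filter_upwards with x
  have : dist x y ≤ dist x₀ x + dist x₀ y := by
    rw [dist_comm x₀ x]; exact dist_triangle x x₀ y
  simpa [abs_of_nonneg dist_nonneg] using this

lemma KRaux.lip_integrable (μ : Measure X) [IsProbabilityMeasure μ]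
    (hμ : HasFiniteFirstMoment μ) {f : X → ℝ} (hf : LipschitzWith 1 f) :
    Integrable f μ := by
  obtain ⟨x₀, h0⟩ := hμ
  refine ((integrable_const |f x₀|).add h0).mono' hf.continuous.aestronglyMeasurable ?_
  filter_upwards with x
  have h1 : |f x - f x₀| ≤ dist x₀ x := by
    simpa [Real.dist_eq, dist_comm x x₀] using hf.dist_le_mul x x₀
  calc ‖f x‖ = |f x - f x₀ + f x₀| := by rw [Real.norm_eq_abs]; ring_nf
  _ ≤ |f x - f x₀| + |f x₀| := abs_add_le _ _
  _ ≤ dist x₀ x + |f x₀| := by linarith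
  _ = |f x₀| + dist x₀ x := by ring

lemma KRaux.easy_dir [SecondCountableTopology X]
    (μ ν : Measure X) [IsProbabilityMeasure μ] [IsProbabilityMeasure ν]
    (hμ : HasFiniteFirstMoment μ) (hν : HasFiniteFirstMoment ν)
    {f : X → ℝ} (hf : LipschitzWith 1 f) {π : Measure (X × X)}
    [IsProbabilityMeasure π]
    (h1 : π.map Prod.fst = μ) (h2 : π.map Prod.snd = ν) :
    |(∫ x, f x ∂μ) - ∫ x, f x ∂ν| ≤ ∫ p, dist p.1 p.2 ∂π := by
  obtain ⟨x₀, hm0⟩ := hμ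
  have hfm : AEStronglyMeasurable f μ := hf.continuous.aestronglyMeasurable
  have hint1 : Integrable (fun p : X × X => f p.1) π := by
    have := (integrable_map_measure (f := Prod.fst)
      (h1 ▸ hf.continuous.aestronglyMeasurable) measurable_fst.aemeasurable).mp
      (h1 ▸ KRaux.lip_integrable μ ⟨x₀, hm0⟩ hf)
    exact this
  have hint2 : Integrable (fun p : X × X => f p.2) π := by
    have := (integrable_map_measure (f := Prod.snd)
      (h2 ▸ hf.continuous.aestronglyMeasurable) measurable_snd.aemeasurable).mp
      (h2 ▸ KRaux.lip_integrable ν hν hf)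
    exact this
  have hdint : Integrable (fun p : X × X => dist p.1 p.2) π := by
    have i1 : Integrable (fun p : X × X => dist p.1 x₀) π := by
      have := (integrable_map_measure (f := Prod.fst)
        (g := fun x => dist x x₀)
        (by exact (Continuous.dist continuous_id continuous_const).aestronglyMeasurable)
        measurable_fst.aemeasurable).mp (h1 ▸ KRaux.dist_integrable μ ⟨x₀, hm0⟩ x₀)
      exact this
    have i2 : Integrable (fun p : X × X => dist p.2 x₀) π := by
      have := (integrable_map_measure (f := Prod.snd)
        (g := fun x => dist x x₀)
        (by exact (Continuous.dist continuous_id continuous_const).aestronglyMeasurable)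
        measurable_snd.aemeasurable).mp (h2 ▸ KRaux.dist_integrable ν hν x₀)
      exact this
    refine (i1.add i2).mono' ?_ ?_
    · exact (continuous_fst.dist continuous_snd).aestronglyMeasurable
    · filter_upwards with p
      have : dist p.1 p.2 ≤ dist p.1 x₀ + dist p.2 x₀ := dist_triangle_right _ _ _
      simpa [abs_of_nonneg dist_nonneg] using this
  have e1 : ∫ x, f x ∂μ = ∫ p : X × X, f p.1 ∂π := by
    rw [← h1, integral_map measurable_fst.aemeasurable
      (h1 ▸ hf.continuous.aestronglyMeasurable)]
  have e2 : ∫ x, f x ∂ν = ∫ p : X × X, f p.2 ∂π := by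
    rw [← h2, integral_map measurable_snd.aemeasurable
      (h2 ▸ hf.continuous.aestronglyMeasurable)]
  rw [e1, e2, ← integral_sub hint1 hint2]
  calc |∫ p : X × X, (f p.1 - f p.2) ∂π| ≤ ∫ p : X × X, |f p.1 - f p.2| ∂π := by
        simpa [Real.norm_eq_abs] using norm_integral_le_integral_norm fun p : X × X => f p.1 - f p.2
  _ ≤ ∫ p : X × X, dist p.1 p.2 ∂π := by
      refine integral_mono ((hint1.sub hint2).abs) hdint fun p => ?_
      simpa [Real.dist_eq] using hf.dist_le_mul p.1 p.2

lemma KRaux.exists_discretization [SecondCountableTopology X]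
    [TopologicalSpace.SeparableSpace X]
    (μ : Measure X) [IsProbabilityMeasure μ] (hμ : HasFiniteFirstMoment μ)
    {ε : ℝ} (hε : 0 < ε) :
    ∃ (T : X → X) (P : Finset X), Measurable T ∧ (∀ x, T x ∈ P) ∧
      Integrable (fun x => dist x (T x)) μ ∧ (∫ x, dist x (T x) ∂μ) ≤ ε := by
  classical
  obtain ⟨x₀, hx₀⟩ := hμ
  haveI : Nonempty X := ⟨x₀⟩
  obtain ⟨z, hz⟩ := TopologicalSpace.exists_dense_seq X
  have hp : ∀ x : X, ∃ n, x ∈ Metric.ball (z n) (ε / 2) := by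
    intro x
    obtain ⟨n, hn⟩ := hz.exists_dist_lt x (by positivity : (0:ℝ) < ε / 2)
    exact ⟨n, by simpa [Metric.mem_ball, dist_comm] using hn⟩
  have hkm : Measurable (fun x => Nat.find (hp x)) :=
    measurable_find hp fun n => measurableSet_ball
  set k : X → ℕ := fun x => Nat.find (hp x) with hk
  have hkball : ∀ x, dist x (z (k x)) < ε / 2 := fun x => Nat.find_spec (hp x)
  set s : ℕ → Set X := fun N => k ⁻¹' (Iio N) with hs
  have hsm : ∀ N, MeasurableSet (s N) := fun N => hkm measurableSet_Iio
  have hsmono : Monotone s := fun N M hNM x hx => lt_of_lt_of_le hx hNM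
  have hsunion : (⋃ N, s N) = univ := by
    ext x; simp only [mem_iUnion, mem_univ, iff_true]
    exact ⟨k x + 1, by simp [s]⟩
  set g : X → ℝ := fun x => dist x₀ x with hg
  have htend : Tendsto (fun N => ∫ x in s N, g x ∂μ) atTop (𝓝 (∫ x, g x ∂μ)) := by
    have := tendsto_setIntegral_of_monotone hsm hsmono (by rw [hsunion]; exact hx₀.integrableOn)
    rwa [hsunion, setIntegral_univ] at this
  obtain ⟨N, hN⟩ := (Metric.tendsto_atTop.mp htend (ε / 2) (by positivity) : ∃ N, ∀ n ≥ N, _)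
  have hNd : |(∫ x in s N, g x ∂μ) - ∫ x, g x ∂μ| < ε / 2 := by
    simpa [Real.dist_eq] using hN N le_rfl
  set T : X → X := fun x => if k x < N then z (k x) else x₀ with hT
  have hTm : Measurable T := by
    refine Measurable.ite (hkm measurableSet_Iio) ?_ measurable_const
    exact (Measurable.of_discrete (f := z)).comp hkm
  set P : Finset X := (Finset.range N).image z ∪ {x₀} with hP
  have hTP : ∀ x, T x ∈ P := by
    intro x
    by_cases h : k x < N
    · simp only [hT, if_pos h, hP, Finset.mem_union]
      exact Or.inl (Finset.mem_image.mpr ⟨k x, Finset.mem_range.mpr h, rfl⟩)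
    · simp only [hT, if_neg h, hP, Finset.mem_union]
      exact Or.inr (Finset.mem_singleton_self x₀)
  set B : X → ℝ := fun x => ε / 2 + (s N)ᶜ.indicator g x with hB
  have hbd : ∀ x, dist x (T x) ≤ B x := by
    intro x
    by_cases h : k x < N
    · have h0 : (s N)ᶜ.indicator g x = 0 :=
        indicator_of_notMem (by simp [s, h]) g
      calc dist x (T x) = dist x (z (k x)) := by rw [hT]; simp [h]
      _ ≤ ε / 2 := (hkball x).le
      _ ≤ B x := by rw [hB]; simp [h0]
    · have h0 : (s N)ᶜ.indicator g x = g x :=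
        indicator_of_mem (by simp [s, h]) g
      calc dist x (T x) = dist x₀ x := by rw [hT]; simp [h, dist_comm]
      _ ≤ B x := by rw [hB]; simp only [h0, hg]; linarith
  have hBint : Integrable B μ :=
    (integrable_const _).add (hx₀.indicator (hsm N).compl)
  have hdint : Integrable (fun x => dist x (T x)) μ := by
    refine hBint.mono' (measurable_id.dist hTm).aestronglyMeasurable ?_
    filter_upwards with x
    rw [Real.norm_eq_abs, abs_of_nonneg dist_nonneg]
    exact hbd x
  refine ⟨T, P, hTm, hTP, hdint, ?_⟩
  have h1 : ∫ x, dist x (T x) ∂μ ≤ ∫ x, B x ∂μ := integral_mono hdint hBint hbd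
  have h2 : ∫ x, B x ∂μ = ε / 2 + ∫ x in (s N)ᶜ, g x ∂μ := by
    rw [hB]
    rw [integral_add (integrable_const _) (hx₀.indicator (hsm N).compl),
      integral_const, integral_indicator (hsm N).compl]
    simp
  have h3 : (∫ x in (s N)ᶜ, g x ∂μ) = (∫ x, g x ∂μ) - ∫ x in s N, g x ∂μ := by
    have := integral_add_compl (hsm N) hx₀
    linarith
  have h4 : (∫ x in s N, g x ∂μ) ≤ ∫ x, g x ∂μ := by
    have := integral_add_compl (hsm N) hx₀
    have h5 : 0 ≤ ∫ x in (s N)ᶜ, g x ∂μ :=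
      setIntegral_nonneg (hsm N).compl fun x _ => dist_nonneg
    linarith
  have : (∫ x, g x ∂μ) - ∫ x in s N, g x ∂μ < ε / 2 := by
    rw [abs_sub_comm] at hNd
    calc (∫ x, g x ∂μ) - ∫ x in s N, g x ∂μ ≤ |(∫ x, g x ∂μ) - ∫ x in s N, g x ∂μ| := le_abs_self _
    _ < ε / 2 := hNd
  linarith [h1, h2, h3]

lemma KRaux.finite_dual (P : Finset X) (a b : X → ℝ)
    (ha : ∀ p ∈ P, 0 ≤ a p) (hb : ∀ p ∈ P, 0 ≤ b p)
    (hsa : ∑ p ∈ P, a p = 1) (hsb : ∑ p ∈ P, b p = 1)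
    {W : ℝ} (hW : ∀ x : X → X → ℝ, (∀ p ∈ P, ∀ q ∈ P, 0 ≤ x p q) →
      (∀ p ∈ P, ∑ q ∈ P, x p q = a p) → (∀ q ∈ P, ∑ p ∈ P, x p q = b q) →
      W ≤ ∑ p ∈ P, ∑ q ∈ P, x p q * dist p q)
    {ε : ℝ} (hε : 0 < ε) :
    ∃ f : X → ℝ, LipschitzWith 1 f ∧ W - ε ≤ ∑ p ∈ P, f p * (a p - b p) := by
  classical
  have hPne : P.Nonempty := by
    by_contra h
    rw [Finset.not_nonempty_iff_eq_empty] at h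
    rw [h] at hsa; simp at hsa
  set ι := {p : X // p ∈ P}
  set d : ι → ι → ℝ := fun i j => dist (i : X) (j : X) with hd
  -- the cone of (cost-bound, row sums, column sums)
  set K : Set (ℝ × (ι → ℝ) × (ι → ℝ)) :=
    {v | ∃ x : ι → ι → ℝ, (∀ i j, 0 ≤ x i j) ∧ (∀ i, ∑ j, x i j = v.2.1 i) ∧
      (∀ j, ∑ i, x i j = v.2.2 j) ∧ (∑ i, ∑ j, x i j * d i j) ≤ v.1} with hK
  have hKconv : Convex ℝ K := by
    rintro v ⟨x, hx0, hxr, hxc, hxcost⟩ w ⟨y, hy0, hyr, hyc, hycost⟩ θ σ hθ hσ hθσ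
    refine ⟨fun i j => θ * x i j + σ * y i j, fun i j => add_nonneg (mul_nonneg hθ (hx0 i j)) (mul_nonneg hσ (hy0 i j)), fun i => ?_, fun j => ?_, ?_⟩
    · simp only [Finset.sum_add_distrib, ← Finset.mul_sum, hxr, hyr]
      simp [Prod.smul_fst, Prod.smul_snd]
    · simp only [Finset.sum_add_distrib, ← Finset.mul_sum, hxc, hyc]
      simp
    · have : ∑ i, ∑ j, (θ * x i j + σ * y i j) * d i j
          = θ * (∑ i, ∑ j, x i j * d i j) + σ * (∑ i, ∑ j, y i j * d i j) := by
        simp only [Finset.mul_sum, ← Finset.sum_add_distrib]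
        congr 1; ext i; congr 1; ext j; ring
      rw [this]
      have h1 : θ * (∑ i, ∑ j, x i j * d i j) ≤ θ * v.1 := by
        exact mul_le_mul_of_nonneg_left hxcost hθ
      have h2 : σ * (∑ i, ∑ j, y i j * d i j) ≤ σ * w.1 := by
        exact mul_le_mul_of_nonneg_left hycost hσ
      calc _ ≤ θ * v.1 + σ * w.1 := add_le_add h1 h2
      _ = (θ • v + σ • w).1 := by simp
  set av : ι → ℝ := fun i => a (i : X) with hav
  set bv : ι → ℝ := fun i => b (i : X) with hbv
  set y₀ : ℝ × (ι → ℝ) × (ι → ℝ) := (W - ε, av, bv) with hy₀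
  -- the target point is not in the closure of K
  have hy₀K : y₀ ∉ closure K := by
    intro hmem
    obtain ⟨v, hvK, hv⟩ := mem_closure_iff_seq_limit.mp hmem
    choose x hx0 hxr hxc hxcost using hvK
    -- eventual uniform bound on the entries
    have hrowt : ∀ i : ι, Tendsto (fun n => (v n).2.1 i) atTop (𝓝 (av i)) := by
      intro i
      have : Continuous fun y : ℝ × (ι → ℝ) × (ι → ℝ) => y.2.1 i :=
        (continuous_apply i).comp (continuous_fst.comp continuous_snd)
      exact ((this.tendsto y₀).comp hv)
    have hev : ∀ᶠ n in atTop, ∀ i : ι, (v n).2.1 i < av i + 1 :=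
      eventually_all.mpr fun i => (hrowt i).eventually_lt_const (lt_add_one _)
    obtain ⟨N, hN⟩ := eventually_atTop.mp hev
    -- entries live in a compact box
    have hbox : ∀ m, x (m + N) ∈ Icc (0 : ι → ι → ℝ) (fun i _ => av i + 1) := by
      intro m
      constructor
      · intro i; rw [Pi.le_def]; intro j; exact hx0 _ i j
      · intro i; rw [Pi.le_def]; intro j
        calc x (m + N) i j ≤ ∑ j', x (m + N) i j' :=
              Finset.single_le_sum (fun j' _ => hx0 _ i j') (Finset.mem_univ j)
        _ = (v (m + N)).2.1 i := hxr _ i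
        _ ≤ av i + 1 := (hN (m + N) (Nat.le_add_left N m) i).le
    obtain ⟨xl, hxlmem, φ, hφ, hxlim⟩ :=
      isCompact_Icc.tendsto_subseq (x := fun m => x (m + N)) hbox
    have hnt : Tendsto (fun m => φ m + N) atTop atTop :=
      (tendsto_add_atTop_nat N).comp hφ.tendsto_atTop
    have hvlim : Tendsto (fun m => v (φ m + N)) atTop (𝓝 y₀) := hv.comp hnt
    have hentry : ∀ i j, Tendsto (fun m => x (φ m + N) i j) atTop (𝓝 (xl i j)) := by
      intro i j
      have h1 := tendsto_pi_nhds.mp hxlim i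
      exact tendsto_pi_nhds.mp h1 j
    have hxl0 : ∀ i j, 0 ≤ xl i j := by
      intro i j
      have := hxlmem.1
      rw [Pi.le_def] at this
      have := this i
      rw [Pi.le_def] at this
      exact this j
    have hxlr : ∀ i, ∑ j, xl i j = av i := by
      intro i
      have h1 : Tendsto (fun m => ∑ j, x (φ m + N) i j) atTop (𝓝 (∑ j, xl i j)) :=
        tendsto_finset_sum _ fun j _ => hentry i j
      have h2 : Tendsto (fun m => ∑ j, x (φ m + N) i j) atTop (𝓝 (av i)) := by
        have := (tendsto_pi_nhds.mp ((continuous_fst.comp continuous_snd).tendsto y₀ |>.comp hvlim)) i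
        refine this.congr fun m => ?_
        exact (hxr _ i).symm
      exact tendsto_nhds_unique h1 h2
    have hxlc : ∀ j, ∑ i, xl i j = bv j := by
      intro j
      have h1 : Tendsto (fun m => ∑ i, x (φ m + N) i j) atTop (𝓝 (∑ i, xl i j)) :=
        tendsto_finset_sum _ fun i _ => hentry i j
      have h2 : Tendsto (fun m => ∑ i, x (φ m + N) i j) atTop (𝓝 (bv j)) := by
        have := (tendsto_pi_nhds.mp ((continuous_snd.comp continuous_snd).tendsto y₀ |>.comp hvlim)) j
        refine this.congr fun m => ?_
        exact (hxc _ j).symm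
      exact tendsto_nhds_unique h1 h2
    have hxlcost : (∑ i, ∑ j, xl i j * d i j) ≤ W - ε := by
      have h1 : Tendsto (fun m => ∑ i, ∑ j, x (φ m + N) i j * d i j) atTop
          (𝓝 (∑ i, ∑ j, xl i j * d i j)) :=
        tendsto_finset_sum _ fun i _ => tendsto_finset_sum _ fun j _ =>
          (hentry i j).mul_const _
      have h2 : Tendsto (fun m => (v (φ m + N)).1) atTop (𝓝 (W - ε)) :=
        (continuous_fst.tendsto y₀).comp hvlim
      exact le_of_tendsto_of_tendsto h1 h2 (Eventually.of_forall fun m => hxcost _)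
    -- build a feasible matrix on X and contradict hW
    set x' : X → X → ℝ := fun p q =>
      if hp : p ∈ P then if hq : q ∈ P then xl ⟨p, hp⟩ ⟨q, hq⟩ else 0 else 0 with hx'
    have key : ∀ (F : ι → ℝ) (G : X → ℝ), (∀ i : ι, F i = G (i : X)) →
        ∑ i, F i = ∑ p ∈ P, G p := by
      intro F G hFG
      rw [← Finset.sum_coe_sort P G]
      exact Finset.sum_congr rfl fun i _ => hFG i
    have hrow' : ∀ p ∈ P, ∑ q ∈ P, x' p q = a p := by
      intro p hp
      have h1 : ∑ j : ι, xl ⟨p, hp⟩ j = a p := hxlr ⟨p, hp⟩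
      rw [← Finset.sum_coe_sort P (x' p), ← h1]
      refine Finset.sum_congr rfl fun j _ => ?_
      simp [hx', hp]
    have hcol' : ∀ q ∈ P, ∑ p ∈ P, x' p q = b q := by
      intro q hq
      have h1 : ∑ i : ι, xl i ⟨q, hq⟩ = b q := hxlc ⟨q, hq⟩
      rw [← Finset.sum_coe_sort P (fun p => x' p q), ← h1]
      refine Finset.sum_congr rfl fun i _ => ?_
      simp [hx', hq]
    have hcost' : ∑ p ∈ P, ∑ q ∈ P, x' p q * dist p q = ∑ i, ∑ j, xl i j * d i j := by
      rw [← Finset.sum_coe_sort P (fun p => ∑ q ∈ P, x' p q * dist p q)]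
      refine Finset.sum_congr rfl fun i _ => ?_
      rw [← Finset.sum_coe_sort P (fun q => x' (i : X) q * dist (i : X) q)]
      refine Finset.sum_congr rfl fun j _ => ?_
      simp [hx', hd]
    have := hW x' (fun p hp q hq => by simp [hx', hp, hq, hxl0]) hrow' hcol'
    rw [hcost'] at this
    linarith
  -- separation
  obtain ⟨φ, u, hφK, hφpt⟩ :=
    geometric_hahn_banach_closed_point (hKconv.closure) isClosed_closure hy₀K
  have h0K : (0 : ℝ × (ι → ℝ) × (ι → ℝ)) ∈ K := by
    refine ⟨0, fun i j => le_rfl, fun i => by simp, fun j => by simp, by simp⟩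
  have hu0 : 0 < u := by
    have := hφK 0 (subset_closure h0K)
    simpa using this
  have hφle : ∀ y ∈ K, φ y ≤ 0 := by
    intro y hy
    by_contra hpos
    push_neg at hpos
    have hsm : ∀ t : ℝ, 0 ≤ t → t • y ∈ K := by
      rintro t ht
      obtain ⟨x, hx0, hxr, hxc, hxcost⟩ := hy
      refine ⟨fun i j => t * x i j, fun i j => mul_nonneg ht (hx0 i j), fun i => ?_, fun j => ?_, ?_⟩
      · rw [← Finset.mul_sum, hxr]; simp
      · rw [← Finset.mul_sum, hxc]; simp
      · have : ∑ i, ∑ j, t * x i j * d i j = t * ∑ i, ∑ j, x i j * d i j := by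
          simp only [Finset.mul_sum]; congr 1; ext i; congr 1; ext j; ring
        rw [this]
        have : t * (∑ i, ∑ j, x i j * d i j) ≤ t * y.1 := mul_le_mul_of_nonneg_left hxcost ht
        simpa using this
    set t := (u + 1) / φ y with htdef
    have ht : 0 < t := by positivity
    have := hφK (t • y) (subset_closure (hsm t ht.le))
    rw [_root_.map_smul] at this
    have : t • φ y = u + 1 := by
      rw [htdef, smul_eq_mul]; exact div_mul_cancel₀ _ hpos.ne'
    linarith [hφK (t • y) (subset_closure (hsm t ht.le)), this]
  -- decompose φ
  set al : ℝ := φ (1, 0, 0) with hal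
  set gg : ι → ℝ := fun i => φ (0, Pi.single i 1, 0) with hgg
  set hh : ι → ℝ := fun j => φ (0, 0, Pi.single j 1) with hhh
  have h01 : ∀ (i i' : ι), 0 ≤ (Pi.single i (1:ℝ) : ι → ℝ) i' := by
    intro i i'
    rw [Pi.single_apply]
    split <;> norm_num
  have hsingsum : ∀ i : ι, ∑ i', (Pi.single i (1:ℝ) : ι → ℝ) i' = 1 := by
    intro i
    rw [Finset.sum_eq_single i (fun b _ hb => by simp [Pi.single_apply, hb]) (by simp)]; simp
  have hgenK : ∀ i j : ι,
      ((d i j, Pi.single i 1, Pi.single j 1) : ℝ × (ι → ℝ) × (ι → ℝ)) ∈ K := by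
    intro i j
    refine ⟨fun i' j' => (Pi.single i (1:ℝ) : ι → ℝ) i' * (Pi.single j (1:ℝ) : ι → ℝ) j',
      fun i' j' => mul_nonneg (h01 i i') (h01 j j'), fun i' => ?_, fun j' => ?_, ?_⟩
    · rw [← Finset.mul_sum, hsingsum j, mul_one]
    · rw [← Finset.sum_mul, hsingsum i, one_mul]
    · rw [Finset.sum_eq_single i (fun b _ hb => by simp [Pi.single_apply, hb]) (by simp),
        Finset.sum_eq_single j (fun b _ hb => by simp [Pi.single_apply, hb]) (by simp)]; simp
  have hmemone : ((1:ℝ), 0, 0) ∈ K :=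
    ⟨0, fun i j => le_rfl, fun i => by simp, fun j => by simp, by simp⟩
  have hdecgen : ∀ i j : ι,
      φ ((d i j, Pi.single i 1, Pi.single j 1) : ℝ × (ι → ℝ) × (ι → ℝ))
        = d i j * al + gg i + hh j := by
    intro i j
    have hid : ((d i j, Pi.single i 1, Pi.single j 1) : ℝ × (ι → ℝ) × (ι → ℝ))
        = (d i j) • ((1:ℝ), (0:ι → ℝ), (0:ι → ℝ))
          + ((0:ℝ), (Pi.single i 1 : ι → ℝ), (0:ι → ℝ)) + ((0:ℝ), (0:ι → ℝ), (Pi.single j 1 : ι → ℝ)) := by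
      simp [Prod.ext_iff]
    rw [hid, map_add, map_add, _root_.map_smul, smul_eq_mul, hal, hgg, hhh]
  have hgen : ∀ i j : ι, d i j * al + gg i + hh j ≤ 0 := by
    intro i j
    rw [← hdecgen i j]
    exact hφle _ (hgenK i j)
  have hale : al ≤ 0 := hφle _ hmemone
  have hdecpt : φ y₀ = (W - ε) * al + (∑ i, av i * gg i + ∑ j, bv j * hh j) := by
    have hmid : ((0:ℝ), av, (0:ι → ℝ)) = ∑ i, av i • ((0:ℝ), (Pi.single i 1 : ι → ℝ), (0:ι → ℝ)) := by
      rw [Prod.ext_iff]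
      constructor
      · rw [Prod.fst_sum]; simp
      rw [Prod.ext_iff]
      constructor
      · have : (∑ i, av i • ((0:ℝ), (Pi.single i (1:ℝ) : ι → ℝ), (0:ι → ℝ))).2.1
            = ∑ i, av i • (Pi.single i (1:ℝ) : ι → ℝ) := by
          rw [Prod.snd_sum, Prod.fst_sum]
          exact Finset.sum_congr rfl fun i _ => rfl
        rw [this]
        simp only [← Pi.single_smul, smul_eq_mul, mul_one]
        exact (Finset.univ_sum_single av).symm
      · rw [Prod.snd_sum, Prod.snd_sum]; simp
    have hmid2 : ((0:ℝ), (0:ι → ℝ), bv) = ∑ j, bv j • ((0:ℝ), (0:ι → ℝ), (Pi.single j 1 : ι → ℝ)) := by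
      rw [Prod.ext_iff]
      constructor
      · rw [Prod.fst_sum]; simp
      rw [Prod.ext_iff]
      constructor
      · rw [Prod.snd_sum, Prod.fst_sum]; simp
      · have : (∑ j, bv j • ((0:ℝ), (0:ι → ℝ), (Pi.single j (1:ℝ) : ι → ℝ))).2.2
            = ∑ j, bv j • (Pi.single j (1:ℝ) : ι → ℝ) := by
          rw [Prod.snd_sum, Prod.snd_sum]
          exact Finset.sum_congr rfl fun j _ => rfl
        rw [this]
        simp only [← Pi.single_smul, smul_eq_mul, mul_one]
        exact (Finset.univ_sum_single bv).symm
    have hid : y₀ = (W - ε) • ((1:ℝ), (0:ι → ℝ), (0:ι → ℝ))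
        + ((0:ℝ), av, (0:ι → ℝ)) + ((0:ℝ), (0:ι → ℝ), bv) := by
      simp [hy₀, Prod.ext_iff]
    rw [hid, map_add, map_add, _root_.map_smul, smul_eq_mul, hmid, hmid2, map_sum, map_sum]
    have e1 : ∑ i, φ (av i • ((0:ℝ), (Pi.single i 1 : ι → ℝ), (0:ι → ℝ))) = ∑ i, av i * gg i := by
      refine Finset.sum_congr rfl fun i _ => ?_
      rw [_root_.map_smul, smul_eq_mul, hgg]
    have e2 : ∑ j, φ (bv j • ((0:ℝ), (0:ι → ℝ), (Pi.single j 1 : ι → ℝ))) = ∑ j, bv j * hh j := by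
      refine Finset.sum_congr rfl fun j _ => ?_
      rw [_root_.map_smul, smul_eq_mul, hhh]
    rw [e1, e2, hal]
    ring
  have hpt : 0 < (W - ε) * al + (∑ i, av i * gg i + ∑ j, bv j * hh j) := by
    rw [← hdecpt]
    linarith [hφpt, hu0]
  have hsum1 : ∑ i, av i = 1 := by
    rw [hav]
    rw [Finset.sum_coe_sort P a]
    exact hsa
  have hsum2 : ∑ j, bv j = 1 := by
    rw [hbv]
    rw [Finset.sum_coe_sort P b]
    exact hsb
  have hav0 : ∀ i, 0 ≤ av i := fun i => ha _ i.2
  have hbv0 : ∀ j, 0 ≤ bv j := fun j => hb _ j.2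
  have halneg : al < 0 := by
    rcases lt_or_eq_of_le hale with h | h
    · exact h
    exfalso
    have hgh : ∀ i j : ι, gg i + hh j ≤ 0 := by
      intro i j
      have := hgen i j
      rw [h] at this
      simpa using this
    have e1 : ∑ i, av i * gg i = ∑ i, ∑ j, av i * bv j * gg i := by
      refine Finset.sum_congr rfl fun i _ => ?_
      have : ∑ j, av i * bv j * gg i = av i * gg i * ∑ j, bv j := by
        rw [Finset.mul_sum]
        exact Finset.sum_congr rfl fun j _ => by ring
      rw [this, hsum2, mul_one]
    have e2 : ∑ j, bv j * hh j = ∑ i, ∑ j, av i * bv j * hh j := by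
      rw [Finset.sum_comm]
      refine Finset.sum_congr rfl fun j _ => ?_
      have : ∑ i, av i * bv j * hh j = bv j * hh j * ∑ i, av i := by
        rw [Finset.mul_sum]
        exact Finset.sum_congr rfl fun i _ => by ring
      rw [this, hsum1, mul_one]
    have e3 : ∑ i, av i * gg i + ∑ j, bv j * hh j
        = ∑ i, ∑ j, av i * bv j * (gg i + hh j) := by
      rw [e1, e2, ← Finset.sum_add_distrib]
      refine Finset.sum_congr rfl fun i _ => ?_
      rw [← Finset.sum_add_distrib]
      exact Finset.sum_congr rfl fun j _ => by ring
    have e4 : ∑ i, ∑ j : ι, av i * bv j * (gg i + hh j) ≤ 0 := by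
      refine Finset.sum_nonpos fun i _ => Finset.sum_nonpos fun j _ => ?_
      exact mul_nonpos_of_nonneg_of_nonpos (mul_nonneg (hav0 i) (hbv0 j)) (hgh i j)
    rw [h, mul_zero, zero_add, e3] at hpt
    linarith
  set na : ℝ := -al with hna
  have hnapos : 0 < na := by rw [hna]; linarith
  set u' : ι → ℝ := fun i => gg i / na with hu'
  set v' : ι → ℝ := fun j => hh j / na with hv'
  have huv : ∀ i j : ι, u' i + v' j ≤ d i j := by
    intro i j
    have h1 := hgen i j
    have h2 : d i j * al = -(d i j * na) := by rw [hna]; ring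
    have h3 : gg i + hh j ≤ d i j * na := by linarith
    rw [hu', hv']
    rw [← add_div]
    exact (div_le_iff₀ hnapos).mpr (by linarith)
  have hval : W - ε < ∑ i, av i * u' i + ∑ j, bv j * v' j := by
    have h2 : (W - ε) * al = -((W - ε) * na) := by rw [hna]; ring
    have hG : (W - ε) * na < ∑ i, av i * gg i + ∑ j, bv j * hh j := by linarith
    have e : ∑ i, av i * u' i + ∑ j, bv j * v' j
        = (∑ i, av i * gg i + ∑ j, bv j * hh j) / na := by
      rw [add_div, Finset.sum_div, Finset.sum_div]
      congr 1
      · refine Finset.sum_congr rfl fun i _ => ?_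
        show av i * (gg i / na) = av i * gg i / na
        rw [mul_div_assoc]
      · refine Finset.sum_congr rfl fun j _ => ?_
        show bv j * (hh j / na) = bv j * hh j / na
        rw [mul_div_assoc]
    rw [e]
    exact (lt_div_iff₀ hnapos).mpr (by nlinarith)
  -- build the Lipschitz function
  set vv : X → ℝ := fun q => if hq : q ∈ P then v' ⟨q, hq⟩ else 0 with hvv
  set f : X → ℝ := fun y => P.inf' hPne (fun q => dist y q - vv q) with hf
  have hfl : LipschitzWith 1 f := by
    apply LipschitzWith.of_le_add
    intro y y'
    obtain ⟨q, hq, hqeq⟩ := Finset.exists_mem_eq_inf' hPne (fun q => dist y' q - vv q)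
    rw [hf]
    calc P.inf' hPne (fun q' => dist y q' - vv q') ≤ dist y q - vv q := Finset.inf'_le _ hq
    _ ≤ (dist y' q + dist y y') - vv q := by
        have := dist_triangle y y' q
        have h4 : dist y q ≤ dist y y' + dist y' q := this
        linarith
    _ = (dist y' q - vv q) + dist y y' := by ring
    _ = f y' + dist y y' := by rw [hf, ← hqeq]
  have hvvP : ∀ i : ι, vv (i : X) = v' i := by
    intro i
    rw [hvv]
    simp [i.2]
  have hfge : ∀ i : ι, u' i ≤ f (i : X) := by
    intro i
    rw [hf]
    refine Finset.le_inf' _ _ fun q hq => ?_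
    have h1 := huv i ⟨q, hq⟩
    have h2 : vv q = v' ⟨q, hq⟩ := by rw [hvv]; simp [hq]
    rw [h2]
    have : d i ⟨q, hq⟩ = dist (i : X) q := rfl
    linarith [huv i ⟨q, hq⟩]
  have hfle : ∀ i : ι, f (i : X) ≤ -v' i := by
    intro i
    rw [hf]
    have := Finset.inf'_le (fun q => dist (i : X) q - vv q) i.2
    exact this.trans (le_of_eq (by show dist (i:X) (i:X) - vv i = -v' i; rw [hvvP i, dist_self]; ring))
  refine ⟨f, hfl, ?_⟩
  have e0 : ∑ p ∈ P, f p * (a p - b p) = ∑ i : ι, f (i : X) * (av i - bv i) := by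
    rw [← Finset.sum_coe_sort P (fun p => f p * (a p - b p))]
  rw [e0]
  have hterm : ∀ i : ι, av i * u' i + bv i * v' i ≤ f (i : X) * (av i - bv i) := by
    intro i
    have h1 : av i * u' i ≤ av i * f (i : X) := mul_le_mul_of_nonneg_left (hfge i) (hav0 i)
    have h2 : bv i * f (i : X) ≤ bv i * (-v' i) := mul_le_mul_of_nonneg_left (hfle i) (hbv0 i)
    nlinarith
  calc W - ε ≤ ∑ i, av i * u' i + ∑ j, bv j * v' j := hval.le
  _ = ∑ i : ι, (av i * u' i + bv i * v' i) := by rw [Finset.sum_add_distrib]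
  _ ≤ ∑ i : ι, f (i : X) * (av i - bv i) := Finset.sum_le_sum fun i _ => hterm i

lemma KRaux.coupling_of_matrix [SecondCountableTopology X]
    (μ ν : Measure X) [IsProbabilityMeasure μ] [IsProbabilityMeasure ν]
    (hμ : HasFiniteFirstMoment μ) (hν : HasFiniteFirstMoment ν)
    {T S : X → X} (hT : Measurable T) (hS : Measurable S) {P : Finset X}
    (hTP : ∀ x, T x ∈ P) (hSP : ∀ x, S x ∈ P)
    (hTint : Integrable (fun x => dist x (T x)) μ)
    (hSint : Integrable (fun y => dist y (S y)) ν)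
    (x : X → X → ℝ) (hx0 : ∀ p ∈ P, ∀ q ∈ P, 0 ≤ x p q)
    (hrow : ∀ p ∈ P, ∑ q ∈ P, x p q = (μ (T ⁻¹' {p})).toReal)
    (hcol : ∀ q ∈ P, ∑ p ∈ P, x p q = (ν (S ⁻¹' {q})).toReal) :
    ∃ π : Measure (X × X), IsProbabilityMeasure π ∧
      π.map Prod.fst = μ ∧ π.map Prod.snd = ν ∧
      ∫ p, dist p.1 p.2 ∂π ≤ (∑ p ∈ P, ∑ q ∈ P, x p q * dist p q)
        + (∫ x, dist x (T x) ∂μ) + ∫ y, dist y (S y) ∂ν := by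
  classical
  set A : X → Set X := fun p => T ⁻¹' {p} with hA
  set B : X → Set X := fun q => S ⁻¹' {q} with hB
  have hAm : ∀ p, MeasurableSet (A p) := fun p => hT (measurableSet_singleton p)
  have hBm : ∀ q, MeasurableSet (B q) := fun q => hS (measurableSet_singleton q)
  set ta : X → ℝ := fun p => (μ (A p)).toReal with hta
  set tb : X → ℝ := fun q => (ν (B q)).toReal with htb
  have hta0 : ∀ p, 0 ≤ ta p := fun p => ENNReal.toReal_nonneg
  have htb0 : ∀ q, 0 ≤ tb q := fun q => ENNReal.toReal_nonneg
  have hμA : ∀ p, μ (A p) ≠ ⊤ := fun p => measure_ne_top μ _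
  have hνB : ∀ q, ν (B q) ≠ ⊤ := fun q => measure_ne_top ν _
  have hAofReal : ∀ p, ENNReal.ofReal (ta p) = μ (A p) := fun p =>
    ENNReal.ofReal_toReal (hμA p)
  have hBofReal : ∀ q, ENNReal.ofReal (tb q) = ν (B q) := fun q =>
    ENNReal.ofReal_toReal (hνB q)
  have hrow' : ∀ p ∈ P, ∑ q ∈ P, x p q = ta p := hrow
  have hcol' : ∀ q ∈ P, ∑ p ∈ P, x p q = tb q := hcol
  have hxa : ∀ p ∈ P, ∀ q ∈ P, x p q ≤ ta p := by
    intro p hp q hq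
    rw [← hrow' p hp]
    exact Finset.single_le_sum (fun q' hq' => hx0 p hp q' hq') hq
  have hxb : ∀ p ∈ P, ∀ q ∈ P, x p q ≤ tb q := by
    intro p hp q hq
    rw [← hcol' q hq]
    exact Finset.single_le_sum (fun p' hp' => hx0 p' hp' q hq) hp
  set c : X → X → ℝ≥0∞ := fun p q => ENNReal.ofReal (x p q / (ta p * tb q)) with hc
  set ρ : X → X → Measure (X × X) :=
    fun p q => (μ.restrict (A p)).prod (ν.restrict (B q)) with hρ
  set π : Measure (X × X) := ∑ p ∈ P, ∑ q ∈ P, c p q • ρ p q with hπ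
  -- map of finite sums of measures
  have map_fsum : ∀ (s : Finset X) (m : X → Measure (X × X)) (f : X × X → X),
      Measurable f → (∑ i ∈ s, m i).map f = ∑ i ∈ s, (m i).map f := by
    intro s m f hf
    induction s using Finset.induction with
    | empty => simp
    | insert _ _ h ih =>
        rw [Finset.sum_insert h, Measure.map_add _ _ hf, ih, Finset.sum_insert h]
  -- partition sums
  have hAdisj : (↑P : Set X).Pairwise (Function.onFun Disjoint A) := by
    intro p _ q _ hpq
    refine Set.disjoint_left.mpr fun z hzp hzq => hpq ?_
    have h1 : T z = p := hzp
    have h2 : T z = q := hzq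
    rw [← h1, h2]
  have hBdisj : (↑P : Set X).Pairwise (Function.onFun Disjoint B) := by
    intro p _ q _ hpq
    refine Set.disjoint_left.mpr fun z hzp hzq => hpq ?_
    have h1 : S z = p := hzp
    have h2 : S z = q := hzq
    rw [← h1, h2]
  have hAcover : (⋃ p ∈ P, A p) = univ := by
    ext z; simp only [mem_iUnion, mem_univ, iff_true]
    exact ⟨T z, hTP z, rfl⟩
  have hBcover : (⋃ q ∈ P, B q) = univ := by
    ext z; simp only [mem_iUnion, mem_univ, iff_true]
    exact ⟨S z, hSP z, rfl⟩
  have hrestA : ∑ p ∈ P, μ.restrict (A p) = μ := by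
    ext s hs
    rw [Measure.finset_sum_apply]
    simp only [Measure.restrict_apply hs]
    rw [← measure_biUnion_finset (hAdisj.mono' ?mono) (fun p _ => hs.inter (hAm p))]
    case mono => intro p q h; exact h.mono (inter_subset_right) (inter_subset_right)
    · congr 1
      rw [← inter_iUnion₂]
      rw [hAcover, inter_univ]
  have hrestB : ∑ q ∈ P, ν.restrict (B q) = ν := by
    ext s hs
    rw [Measure.finset_sum_apply]
    simp only [Measure.restrict_apply hs]
    rw [← measure_biUnion_finset (hBdisj.mono' ?mono2) (fun q _ => hs.inter (hBm q))]
    case mono2 => intro p q h; exact h.mono (inter_subset_right) (inter_subset_right)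
    · congr 1
      rw [← inter_iUnion₂]
      rw [hBcover, inter_univ]
  -- coefficient identities
  have hcb : ∀ p ∈ P, ∀ q ∈ P, c p q * ν (B q) = ENNReal.ofReal (x p q / ta p) := by
    intro p hp q hq
    rw [← hBofReal q, hc]
    rw [← ENNReal.ofReal_mul (div_nonneg (hx0 p hp q hq) (mul_nonneg (hta0 p) (htb0 q)))]
    congr 1
    by_cases hb : tb q = 0
    · have hx : x p q = 0 := le_antisymm (hb ▸ hxb p hp q hq) (hx0 p hp q hq)
      simp [hx, hb]
    by_cases ha2 : ta p = 0
    · have hx : x p q = 0 := le_antisymm (ha2 ▸ hxa p hp q hq) (hx0 p hp q hq)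
      simp [hx, ha2]
    field_simp
  have hca : ∀ p ∈ P, ∀ q ∈ P, c p q * μ (A p) = ENNReal.ofReal (x p q / tb q) := by
    intro p hp q hq
    rw [← hAofReal p, hc]
    rw [← ENNReal.ofReal_mul (div_nonneg (hx0 p hp q hq) (mul_nonneg (hta0 p) (htb0 q)))]
    congr 1
    by_cases hb : tb q = 0
    · have hx : x p q = 0 := le_antisymm (hb ▸ hxb p hp q hq) (hx0 p hp q hq)
      simp [hx, hb]
    by_cases ha2 : ta p = 0
    · have hx : x p q = 0 := le_antisymm (ha2 ▸ hxa p hp q hq) (hx0 p hp q hq)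
      simp [hx, ha2]
    field_simp
  -- first marginal
  have hfst : π.map Prod.fst = μ := by
    rw [hπ, map_fsum _ _ _ measurable_fst]
    have e1 : ∀ p ∈ P, (∑ q ∈ P, c p q • ρ p q).map Prod.fst = μ.restrict (A p) := by
      intro p hp
      rw [map_fsum _ _ _ measurable_fst]
      have e2 : ∀ q ∈ P, (c p q • ρ p q).map Prod.fst
          = ENNReal.ofReal (x p q / ta p) • μ.restrict (A p) := by
        intro q hq
        rw [Measure.map_smul, hρ]
        rw [Measure.map_fst_prod]
        rw [Measure.restrict_apply_univ]
        rw [smul_smul, hcb p hp q hq]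
      rw [Finset.sum_congr rfl e2, ← Finset.sum_smul]
      by_cases ha2 : ta p = 0
      · have h0 : μ (A p) = 0 := by
          have := (ENNReal.toReal_eq_zero_iff _).mp ha2
          exact this.resolve_right (hμA p)
        rw [Measure.restrict_eq_zero.mpr h0]
        simp
      · have : ∑ q ∈ P, ENNReal.ofReal (x p q / ta p) = 1 := by
          rw [← ENNReal.ofReal_sum_of_nonneg (fun q hq => div_nonneg (hx0 p hp q hq) (hta0 p))]
          rw [← Finset.sum_div, hrow' p hp]
          rw [div_self ha2, ENNReal.ofReal_one]
        rw [this, one_smul]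
    rw [Finset.sum_congr rfl e1, hrestA]
  -- second marginal
  have hsnd : π.map Prod.snd = ν := by
    rw [hπ, map_fsum _ _ _ measurable_snd]
    have e0 : ∀ p ∈ P, (∑ q ∈ P, c p q • ρ p q).map Prod.snd
        = ∑ q ∈ P, (c p q • ρ p q).map Prod.snd := fun p _ =>
      map_fsum _ _ _ measurable_snd
    rw [Finset.sum_congr rfl e0, Finset.sum_comm]
    have e1 : ∀ q ∈ P, (∑ p ∈ P, (c p q • ρ p q).map Prod.snd) = ν.restrict (B q) := by
      intro q hq
      have e2 : ∀ p ∈ P, (c p q • ρ p q).map Prod.snd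
          = ENNReal.ofReal (x p q / tb q) • ν.restrict (B q) := by
        intro p hp
        rw [Measure.map_smul, hρ]
        rw [Measure.map_snd_prod]
        rw [Measure.restrict_apply_univ]
        rw [smul_smul, hca p hp q hq]
      rw [Finset.sum_congr rfl e2, ← Finset.sum_smul]
      by_cases hb2 : tb q = 0
      · have h0 : ν (B q) = 0 := by
          have := (ENNReal.toReal_eq_zero_iff _).mp hb2
          exact this.resolve_right (hνB q)
        rw [Measure.restrict_eq_zero.mpr h0]
        simp
      · have : ∑ p ∈ P, ENNReal.ofReal (x p q / tb q) = 1 := by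
          rw [← ENNReal.ofReal_sum_of_nonneg (fun p hp => div_nonneg (hx0 p hp q hq) (htb0 q))]
          rw [← Finset.sum_div, hcol' q hq]
          rw [div_self hb2, ENNReal.ofReal_one]
        rw [this, one_smul]
    rw [Finset.sum_congr rfl e1, hrestB]
  have hprob : IsProbabilityMeasure π := by
    constructor
    have : π.map Prod.fst Set.univ = μ Set.univ := by rw [hfst]
    rw [Measure.map_apply measurable_fst MeasurableSet.univ] at this
    simpa using this
  refine ⟨π, hprob, hfst, hsnd, ?_⟩
  -- integral identities for the pieces
  have hρfst : ∀ p q : X, (ρ p q).map Prod.fst = (ν (B q)) • μ.restrict (A p) := by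
    intro p q; rw [hρ, Measure.map_fst_prod, Measure.restrict_apply_univ]
  have hρsnd : ∀ p q : X, (ρ p q).map Prod.snd = (μ (A p)) • ν.restrict (B q) := by
    intro p q; rw [hρ, Measure.map_snd_prod, Measure.restrict_apply_univ]
  have hdam : ∀ p : X, AEStronglyMeasurable (fun z : X × X => dist z.1 z.2) (ρ p p) := by
    intro p
    exact (continuous_fst.dist continuous_snd).aestronglyMeasurable
  have hint1 : ∀ p q : X, Integrable (fun z : X × X => dist z.1 p) (ρ p q) := by
    intro p q
    have h1 : Integrable (fun x : X => dist x p) ((ν (B q)) • μ.restrict (A p)) :=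
      ((KRaux.dist_integrable μ hμ p).restrict).smul_measure (hνB q)
    rw [← hρfst p q] at h1
    exact (integrable_map_measure (f := Prod.fst)
      (by exact (Continuous.dist continuous_id continuous_const).aestronglyMeasurable)
      measurable_fst.aemeasurable).mp h1
  have hint2 : ∀ p q : X, Integrable (fun z : X × X => dist z.2 q) (ρ p q) := by
    intro p q
    have h1 : Integrable (fun y : X => dist y q) ((μ (A p)) • ν.restrict (B q)) :=
      ((KRaux.dist_integrable ν hν q).restrict).smul_measure (hμA p)
    rw [← hρsnd p q] at h1
    exact (integrable_map_measure (f := Prod.snd)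
      (by exact (Continuous.dist continuous_id continuous_const).aestronglyMeasurable)
      measurable_snd.aemeasurable).mp h1
  have hintc : ∀ p q : X, Integrable (fun _ : X × X => dist p q) (ρ p q) := by
    intro p q
    exact integrable_const _
  have hintd : ∀ p q : X, Integrable (fun z : X × X => dist z.1 z.2) (ρ p q) := by
    intro p q
    refine (((hint1 p q).add (hintc p q)).add (hint2 p q)).mono'
      (continuous_fst.dist continuous_snd).aestronglyMeasurable ?_
    filter_upwards with z
    rw [Real.norm_eq_abs, abs_of_nonneg dist_nonneg]
    calc dist z.1 z.2 ≤ dist z.1 p + dist p q + dist q z.2 := dist_triangle4 _ _ _ _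
    _ = dist z.1 p + dist p q + dist z.2 q := by rw [dist_comm q]
  have hcne : ∀ p q : X, c p q ≠ ⊤ := fun p q => ENNReal.ofReal_ne_top
  -- expand the integral over π
  have hcost : ∫ z, dist z.1 z.2 ∂π
      = ∑ p ∈ P, ∑ q ∈ P, (c p q).toReal * ∫ z, dist z.1 z.2 ∂(ρ p q) := by
    rw [hπ, integral_finset_sum_measure]
    · refine Finset.sum_congr rfl fun p hp => ?_
      rw [integral_finset_sum_measure]
      · exact Finset.sum_congr rfl fun q hq => integral_smul_measure _ _
      · exact fun q hq => (hintd p q).smul_measure (hcne p q)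
    · intro p hp
      rw [integrable_finset_sum_measure]
      exact fun q hq => (hintd p q).smul_measure (hcne p q)
  set I1 : X → ℝ := fun p => ∫ z in A p, dist z p ∂μ with hI1def
  set I2 : X → ℝ := fun q => ∫ z in B q, dist z q ∂ν with hI2def
  have hI10 : ∀ p, 0 ≤ I1 p := fun p => setIntegral_nonneg (hAm p) fun z _ => dist_nonneg
  have hI20 : ∀ q, 0 ≤ I2 q := fun q => setIntegral_nonneg (hBm q) fun z _ => dist_nonneg
  have hJ1 : ∀ p q : X, ∫ z, dist z.1 p ∂(ρ p q) = tb q * I1 p := by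
    intro p q
    have h1 : ∫ z, dist z.1 p ∂(ρ p q) = ∫ w, dist w p ∂((ρ p q).map Prod.fst) := by
      rw [integral_map measurable_fst.aemeasurable
        (by exact (Continuous.dist continuous_id continuous_const).aestronglyMeasurable)]
    rw [h1, hρfst p q, integral_smul_measure]
    rfl
  have hJ2 : ∀ p q : X, ∫ z, dist z.2 q ∂(ρ p q) = ta p * I2 q := by
    intro p q
    have h1 : ∫ z, dist z.2 q ∂(ρ p q) = ∫ w, dist w q ∂((ρ p q).map Prod.snd) := by
      rw [integral_map measurable_snd.aemeasurable
        (by exact (Continuous.dist continuous_id continuous_const).aestronglyMeasurable)]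
    rw [h1, hρsnd p q, integral_smul_measure]
    rfl
  have hJc : ∀ p q : X, ∫ _ : X × X, dist p q ∂(ρ p q) = dist p q * (ta p * tb q) := by
    intro p q
    rw [integral_const]
    have : (ρ p q) univ = μ (A p) * ν (B q) := by
      rw [hρ, ← Set.univ_prod_univ, Measure.prod_prod,
        Measure.restrict_apply_univ, Measure.restrict_apply_univ]
    rw [measureReal_def, this, ENNReal.toReal_mul, smul_eq_mul]
    ring
  have hbound : ∀ p ∈ P, ∀ q ∈ P, ∫ z, dist z.1 z.2 ∂(ρ p q)
      ≤ tb q * I1 p + dist p q * (ta p * tb q) + ta p * I2 q := by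
    intro p hp q hq
    have hint12 : Integrable (fun z : X × X => dist z.1 p + dist p q) (ρ p q) :=
      (hint1 p q).add (hintc p q)
    have hint123 : Integrable (fun z : X × X => dist z.1 p + dist p q + dist z.2 q) (ρ p q) :=
      hint12.add (hint2 p q)
    have h1 : ∫ z, dist z.1 z.2 ∂(ρ p q)
        ≤ ∫ z : X × X, (dist z.1 p + dist p q + dist z.2 q) ∂(ρ p q) := by
      refine integral_mono (hintd p q) hint123 ?_
      intro z
      calc dist z.1 z.2 ≤ dist z.1 p + dist p q + dist q z.2 := dist_triangle4 _ _ _ _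
      _ = dist z.1 p + dist p q + dist z.2 q := by rw [dist_comm q]
    rw [integral_add hint12 (hint2 p q),
      integral_add (hint1 p q) (hintc p q), hJ1, hJ2, hJc] at h1
    exact h1
  have hcto : ∀ p ∈ P, ∀ q ∈ P, (c p q).toReal = x p q / (ta p * tb q) := by
    intro p hp q hq
    rw [hc, ENNReal.toReal_ofReal (div_nonneg (hx0 p hp q hq) (mul_nonneg (hta0 p) (htb0 q)))]
  -- three termwise simplifications
  have hterm1 : ∀ p ∈ P, ∀ q ∈ P,
      x p q / (ta p * tb q) * (tb q * I1 p) = x p q / ta p * I1 p := by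
    intro p hp q hq
    by_cases hb : tb q = 0
    · have hx : x p q = 0 := le_antisymm (hb ▸ hxb p hp q hq) (hx0 p hp q hq)
      simp [hx, hb]
    by_cases ha2 : ta p = 0
    · have hx : x p q = 0 := le_antisymm (ha2 ▸ hxa p hp q hq) (hx0 p hp q hq)
      simp [hx, ha2]
    field_simp
  have hterm2 : ∀ p ∈ P, ∀ q ∈ P,
      x p q / (ta p * tb q) * (dist p q * (ta p * tb q)) = x p q * dist p q := by
    intro p hp q hq
    by_cases hb : tb q = 0
    · have hx : x p q = 0 := le_antisymm (hb ▸ hxb p hp q hq) (hx0 p hp q hq)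
      simp [hx, hb]
    by_cases ha2 : ta p = 0
    · have hx : x p q = 0 := le_antisymm (ha2 ▸ hxa p hp q hq) (hx0 p hp q hq)
      simp [hx, ha2]
    field_simp
  have hterm3 : ∀ p ∈ P, ∀ q ∈ P,
      x p q / (ta p * tb q) * (ta p * I2 q) = x p q / tb q * I2 q := by
    intro p hp q hq
    by_cases hb : tb q = 0
    · have hx : x p q = 0 := le_antisymm (hb ▸ hxb p hp q hq) (hx0 p hp q hq)
      simp [hx, hb]
    by_cases ha2 : ta p = 0
    · have hx : x p q = 0 := le_antisymm (ha2 ▸ hxa p hp q hq) (hx0 p hp q hq)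
      simp [hx, ha2]
    field_simp
  -- aggregated bounds on the marginal error terms
  have hT1 : ∑ p ∈ P, ∑ q ∈ P, x p q / ta p * I1 p ≤ ∫ z, dist z (T z) ∂μ := by
    have hstep : ∀ p ∈ P, ∑ q ∈ P, x p q / ta p * I1 p ≤ I1 p := by
      intro p hp
      have : ∑ q ∈ P, x p q / ta p * I1 p = (∑ q ∈ P, x p q) / ta p * I1 p := by
        rw [Finset.sum_div, Finset.sum_mul]
      rw [this, hrow' p hp]
      by_cases ha2 : ta p = 0
      · simp [ha2, hI10 p]
      · rw [div_self ha2, one_mul]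
    calc ∑ p ∈ P, ∑ q ∈ P, x p q / ta p * I1 p ≤ ∑ p ∈ P, I1 p :=
          Finset.sum_le_sum hstep
    _ = ∑ p ∈ P, ∫ z in A p, dist z (T z) ∂μ := by
        refine Finset.sum_congr rfl fun p hp => ?_
        refine setIntegral_congr_fun (hAm p) fun z hz => ?_
        have : T z = p := hz
        rw [this]
    _ = ∫ z in ⋃ p ∈ P, A p, dist z (T z) ∂μ :=
        (integral_biUnion_finset P (fun p _ => hAm p) hAdisj
          (fun p _ => hTint.integrableOn)).symm
    _ = ∫ z, dist z (T z) ∂μ := by rw [hAcover, setIntegral_univ]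
  have hT3 : ∑ p ∈ P, ∑ q ∈ P, x p q / tb q * I2 q ≤ ∫ z, dist z (S z) ∂ν := by
    rw [Finset.sum_comm]
    have hstep : ∀ q ∈ P, ∑ p ∈ P, x p q / tb q * I2 q ≤ I2 q := by
      intro q hq
      have : ∑ p ∈ P, x p q / tb q * I2 q = (∑ p ∈ P, x p q) / tb q * I2 q := by
        rw [Finset.sum_div, Finset.sum_mul]
      rw [this, hcol' q hq]
      by_cases hb2 : tb q = 0
      · simp [hb2, hI20 q]
      · rw [div_self hb2, one_mul]
    calc ∑ q ∈ P, ∑ p ∈ P, x p q / tb q * I2 q ≤ ∑ q ∈ P, I2 q :=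
          Finset.sum_le_sum hstep
    _ = ∑ q ∈ P, ∫ z in B q, dist z (S z) ∂ν := by
        refine Finset.sum_congr rfl fun q hq => ?_
        refine setIntegral_congr_fun (hBm q) fun z hz => ?_
        have : S z = q := hz
        rw [this]
    _ = ∫ z in ⋃ q ∈ P, B q, dist z (S z) ∂ν :=
        (integral_biUnion_finset P (fun q _ => hBm q) hBdisj
          (fun q _ => hSint.integrableOn)).symm
    _ = ∫ z, dist z (S z) ∂ν := by rw [hBcover, setIntegral_univ]
  -- put everything together
  rw [hcost]
  have hmain : ∑ p ∈ P, ∑ q ∈ P, (c p q).toReal * ∫ z, dist z.1 z.2 ∂(ρ p q)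
      ≤ ∑ p ∈ P, ∑ q ∈ P,
        (x p q / ta p * I1 p + x p q * dist p q + x p q / tb q * I2 q) := by
    refine Finset.sum_le_sum fun p hp => Finset.sum_le_sum fun q hq => ?_
    rw [hcto p hp q hq]
    calc x p q / (ta p * tb q) * ∫ z, dist z.1 z.2 ∂(ρ p q)
        ≤ x p q / (ta p * tb q) * (tb q * I1 p + dist p q * (ta p * tb q) + ta p * I2 q) :=
          mul_le_mul_of_nonneg_left (hbound p hp q hq)
            (div_nonneg (hx0 p hp q hq) (mul_nonneg (hta0 p) (htb0 q)))
    _ = x p q / (ta p * tb q) * (tb q * I1 p)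
          + x p q / (ta p * tb q) * (dist p q * (ta p * tb q))
          + x p q / (ta p * tb q) * (ta p * I2 q) := by ring
    _ = x p q / ta p * I1 p + x p q * dist p q + x p q / tb q * I2 q := by
        rw [hterm1 p hp q hq, hterm2 p hp q hq, hterm3 p hp q hq]
  have hsplit : ∑ p ∈ P, ∑ q ∈ P,
      (x p q / ta p * I1 p + x p q * dist p q + x p q / tb q * I2 q)
      = (∑ p ∈ P, ∑ q ∈ P, x p q / ta p * I1 p)
        + (∑ p ∈ P, ∑ q ∈ P, x p q * dist p q)
        + ∑ p ∈ P, ∑ q ∈ P, x p q / tb q * I2 q := by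
    rw [← Finset.sum_add_distrib, ← Finset.sum_add_distrib]
    refine Finset.sum_congr rfl fun p hp => ?_
    rw [← Finset.sum_add_distrib, ← Finset.sum_add_distrib]
  rw [hsplit] at hmain
  linarith [hT1, hT3, hmain]

end Aux

section Main

open Set Filter Topology
open scoped ENNReal

/-- Kantorovich–Rubinstein duality: for Borel probability measures `μ`, `ν` with
finite first moments on a complete separable metric space, the integral probability
metric induced by the family of all 1-Lipschitz functions equals the 1-Wasserstein
distance. -/
theorem stmt_2 {X : Type*} [MetricSpace X] [CompleteSpace X]
    [TopologicalSpace.SeparableSpace X] [MeasurableSpace X] [BorelSpace X]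
    (μ ν : Measure X) [IsProbabilityMeasure μ] [IsProbabilityMeasure ν]
    (hμ : HasFiniteFirstMoment μ) (hν : HasFiniteFirstMoment ν) :
    (⨆ f ∈ {f : X → ℝ | LipschitzWith 1 f}, |(∫ x, f x ∂μ) - ∫ x, f x ∂ν|)
      = wassersteinDist μ ν := by
  classical
  haveI : SecondCountableTopology X := UniformSpace.secondCountable_of_separable X
  obtain ⟨x₀, hx₀⟩ := id hμ
  haveI : Nonempty X := ⟨x₀⟩
  set C : Set ℝ := {c : ℝ | ∃ π : Measure (X × X), IsProbabilityMeasure π ∧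
    π.map Prod.fst = μ ∧ π.map Prod.snd = ν ∧ c = ∫ p, dist p.1 p.2 ∂π} with hC
  have hWdef : wassersteinDist μ ν = sInf C := rfl
  have hCne : C.Nonempty := by
    refine ⟨∫ p : X × X, dist p.1 p.2 ∂(μ.prod ν), μ.prod ν, inferInstance, ?_, ?_, rfl⟩
    · rw [Measure.map_fst_prod]; simp
    · rw [Measure.map_snd_prod]; simp
  have hC0 : ∀ c ∈ C, 0 ≤ c := by
    rintro c ⟨π, hπ, h1, h2, rfl⟩
    exact integral_nonneg fun z => dist_nonneg
  have hCbdd : BddBelow C := ⟨0, fun c hc => hC0 c hc⟩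
  -- the sup side
  set G : (X → ℝ) → ℝ := fun f =>
    ⨆ _ : f ∈ {g : X → ℝ | LipschitzWith 1 g}, |(∫ x, f x ∂μ) - ∫ x, f x ∂ν| with hG
  have hGval : ∀ f, LipschitzWith 1 f → G f = |(∫ x, f x ∂μ) - ∫ x, f x ∂ν| := by
    intro f hf
    exact ciSup_pos hf
  have hGzero : ∀ f, ¬ LipschitzWith 1 f → G f = 0 := by
    intro f hf
    haveI : IsEmpty (f ∈ {g : X → ℝ | LipschitzWith 1 g}) := ⟨hf⟩
    exact Real.iSup_of_isEmpty _
  have hGle : ∀ f, ∀ c ∈ C, G f ≤ c := by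
    intro f c hc
    obtain ⟨π, hπ, h1, h2, rfl⟩ := hc
    by_cases hf : LipschitzWith 1 f
    · rw [hGval f hf]
      exact KRaux.easy_dir μ ν hμ hν hf h1 h2
    · rw [hGzero f hf]
      exact integral_nonneg fun z => dist_nonneg
  have hbdd : BddAbove (Set.range G) := by
    obtain ⟨c, hc⟩ := hCne
    exact ⟨c, by rintro _ ⟨f, rfl⟩; exact hGle f c hc⟩
  have hSup_le : (⨆ f, G f) ≤ wassersteinDist μ ν := by
    rw [hWdef]
    exact le_csInf hCne fun c hc => ciSup_le fun f => hGle f c hc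
  have hle2 : ∀ ε : ℝ, 0 < ε → wassersteinDist μ ν ≤ (⨆ f, G f) + ε := by
    intro ε hε
    have hε' : (0:ℝ) < ε / 6 := by linarith
    obtain ⟨T, PT, hTm, hTP, hTint, hTbound⟩ := KRaux.exists_discretization μ hμ hε'
    obtain ⟨S, PS, hSm, hSP, hSint, hSbound⟩ := KRaux.exists_discretization ν hν hε'
    set P : Finset X := PT ∪ PS with hP
    have hTP' : ∀ x, T x ∈ P := fun x => Finset.mem_union_left _ (hTP x)
    have hSP' : ∀ x, S x ∈ P := fun x => Finset.mem_union_right _ (hSP x)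
    set a : X → ℝ := fun p => (μ (T ⁻¹' {p})).toReal with ha
    set b : X → ℝ := fun q => (ν (S ⁻¹' {q})).toReal with hb
    have ha0 : ∀ p ∈ P, 0 ≤ a p := fun p _ => ENNReal.toReal_nonneg
    have hb0 : ∀ q ∈ P, 0 ≤ b q := fun q _ => ENNReal.toReal_nonneg
    have hfibTm : ∀ p : X, MeasurableSet (T ⁻¹' {p}) :=
      fun p => hTm (measurableSet_singleton p)
    have hfibSm : ∀ q : X, MeasurableSet (S ⁻¹' {q}) :=
      fun q => hSm (measurableSet_singleton q)
    have hdisjT : (↑P : Set X).Pairwise (Function.onFun Disjoint fun p => T ⁻¹' {p}) := by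
      intro p _ q _ hpq
      refine Set.disjoint_left.mpr fun z hzp hzq => hpq ?_
      have h1 : T z = p := hzp
      have h2 : T z = q := hzq
      rw [← h1, h2]
    have hdisjS : (↑P : Set X).Pairwise (Function.onFun Disjoint fun q => S ⁻¹' {q}) := by
      intro p _ q _ hpq
      refine Set.disjoint_left.mpr fun z hzp hzq => hpq ?_
      have h1 : S z = p := hzp
      have h2 : S z = q := hzq
      rw [← h1, h2]
    have hcovT : (⋃ p ∈ P, T ⁻¹' {p}) = univ := by
      ext z; simp only [mem_iUnion, mem_univ, iff_true]
      exact ⟨T z, hTP' z, rfl⟩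
    have hcovS : (⋃ q ∈ P, S ⁻¹' {q}) = univ := by
      ext z; simp only [mem_iUnion, mem_univ, iff_true]
      exact ⟨S z, hSP' z, rfl⟩
    have hsa : ∑ p ∈ P, a p = 1 := by
      rw [ha]
      rw [← ENNReal.toReal_sum (fun p _ => measure_ne_top μ _)]
      rw [← measure_biUnion_finset hdisjT fun p _ => hfibTm p]
      rw [hcovT]
      simp
    have hsb : ∑ q ∈ P, b q = 1 := by
      rw [hb]
      rw [← ENNReal.toReal_sum (fun q _ => measure_ne_top ν _)]
      rw [← measure_biUnion_finset hdisjS fun q _ => hfibSm q]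
      rw [hcovS]
      simp
    -- discrete transport cost
    set M : Set ℝ := {m : ℝ | ∃ x : X → X → ℝ, (∀ p ∈ P, ∀ q ∈ P, 0 ≤ x p q) ∧
      (∀ p ∈ P, ∑ q ∈ P, x p q = a p) ∧ (∀ q ∈ P, ∑ p ∈ P, x p q = b q) ∧
      m = ∑ p ∈ P, ∑ q ∈ P, x p q * dist p q} with hM
    have hMne : M.Nonempty := by
      refine ⟨_, fun p q => a p * b q, fun p hp q hq =>
        mul_nonneg (ha0 p hp) (hb0 q hq), fun p hp => ?_, fun q hq => ?_, rfl⟩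
      · rw [← Finset.mul_sum, hsb, mul_one]
      · rw [← Finset.sum_mul, hsa, one_mul]
    have hMbdd : BddBelow M := by
      refine ⟨0, ?_⟩
      rintro m ⟨x, hx0, _, _, rfl⟩
      exact Finset.sum_nonneg fun p hp => Finset.sum_nonneg fun q hq =>
        mul_nonneg (hx0 p hp q hq) dist_nonneg
    set Wm : ℝ := sInf M with hWm
    obtain ⟨f, hfl, hfsum⟩ := KRaux.finite_dual P a b ha0 hb0 hsa hsb
      (W := Wm) (fun x h1 h2 h3 => csInf_le hMbdd ⟨x, h1, h2, h3, rfl⟩) hε'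
    obtain ⟨m, hmM, hmlt⟩ := Real.lt_sInf_add_pos hMne hε'
    obtain ⟨xm, hxm0, hxmr, hxmc, rfl⟩ := hmM
    obtain ⟨π, hπprob, hπ1, hπ2, hπcost⟩ := KRaux.coupling_of_matrix μ ν hμ hν
      hTm hSm hTP' hSP' hTint hSint xm hxm0 hxmr hxmc
    have hWle : wassersteinDist μ ν ≤ Wm + 3 * (ε / 6) := by
      rw [hWdef]
      have h1 : sInf C ≤ ∫ p, dist p.1 p.2 ∂π := by
        haveI := hπprob
        exact csInf_le hCbdd ⟨π, hπprob, hπ1, hπ2, rfl⟩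
      calc sInf C ≤ ∫ p, dist p.1 p.2 ∂π := h1
      _ ≤ (∑ p ∈ P, ∑ q ∈ P, xm p q * dist p q)
          + (∫ x, dist x (T x) ∂μ) + ∫ y, dist y (S y) ∂ν := hπcost
      _ ≤ (Wm + ε / 6) + ε / 6 + ε / 6 := by
          refine add_le_add (add_le_add hmlt.le hTbound) hSbound
      _ = Wm + 3 * (ε / 6) := by ring
    -- transfer the dual bound back to μ and ν
    have hfTint : Integrable (fun x => f (T x)) μ := by
      refine (integrable_const (∑ p ∈ P, |f p|)).mono'
        ((hfl.continuous.measurable.comp hTm).aestronglyMeasurable) ?_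
      filter_upwards with z
      rw [Real.norm_eq_abs]
      exact Finset.single_le_sum (f := fun p => |f p|) (fun p _ => abs_nonneg _) (hTP' z)
    have hfSint : Integrable (fun y => f (S y)) ν := by
      refine (integrable_const (∑ p ∈ P, |f p|)).mono'
        ((hfl.continuous.measurable.comp hSm).aestronglyMeasurable) ?_
      filter_upwards with z
      rw [Real.norm_eq_abs]
      exact Finset.single_le_sum (f := fun p => |f p|) (fun p _ => abs_nonneg _) (hSP' z)
    have hfT : ∫ x, f (T x) ∂μ = ∑ p ∈ P, f p * a p := by
      have h1 : ∫ x, f (T x) ∂μ = ∫ x in ⋃ p ∈ P, T ⁻¹' {p}, f (T x) ∂μ := by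
        rw [hcovT, setIntegral_univ]
      rw [h1, integral_biUnion_finset P (fun p _ => hfibTm p) hdisjT
        (fun p _ => hfTint.integrableOn)]
      refine Finset.sum_congr rfl fun p hp => ?_
      have h2 : ∫ x in T ⁻¹' {p}, f (T x) ∂μ = ∫ _ in T ⁻¹' {p}, f p ∂μ := by
        refine setIntegral_congr_fun (hfibTm p) fun z hz => ?_
        have : T z = p := hz
        rw [this]
      rw [h2, setIntegral_const, smul_eq_mul, mul_comm]; rfl
    have hfS : ∫ y, f (S y) ∂ν = ∑ q ∈ P, f q * b q := by
      have h1 : ∫ y, f (S y) ∂ν = ∫ y in ⋃ q ∈ P, S ⁻¹' {q}, f (S y) ∂ν := by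
        rw [hcovS, setIntegral_univ]
      rw [h1, integral_biUnion_finset P (fun q _ => hfibSm q) hdisjS
        (fun q _ => hfSint.integrableOn)]
      refine Finset.sum_congr rfl fun q hq => ?_
      have h2 : ∫ y in S ⁻¹' {q}, f (S y) ∂ν = ∫ _ in S ⁻¹' {q}, f q ∂ν := by
        refine setIntegral_congr_fun (hfibSm q) fun z hz => ?_
        have : S z = q := hz
        rw [this]
      rw [h2, setIntegral_const, smul_eq_mul, mul_comm]; rfl
    have hfμ : Integrable f μ := KRaux.lip_integrable μ hμ hfl
    have hfν : Integrable f ν := KRaux.lip_integrable ν hν hfl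
    have hclose1 : |(∫ x, f (T x) ∂μ) - ∫ x, f x ∂μ| ≤ ε / 6 := by
      rw [← integral_sub hfTint hfμ]
      calc |∫ x, (f (T x) - f x) ∂μ| ≤ ∫ x, |f (T x) - f x| ∂μ := by
            simpa [Real.norm_eq_abs] using
              norm_integral_le_integral_norm fun x => f (T x) - f x
      _ ≤ ∫ x, dist x (T x) ∂μ := by
          refine integral_mono (hfTint.sub hfμ).abs hTint fun z => ?_
          have := hfl.dist_le_mul (T z) z
          rw [Real.dist_eq] at this
          simpa [dist_comm] using this
      _ ≤ ε / 6 := hTbound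
    have hclose2 : |(∫ y, f (S y) ∂ν) - ∫ y, f y ∂ν| ≤ ε / 6 := by
      rw [← integral_sub hfSint hfν]
      calc |∫ y, (f (S y) - f y) ∂ν| ≤ ∫ y, |f (S y) - f y| ∂ν := by
            simpa [Real.norm_eq_abs] using
              norm_integral_le_integral_norm fun y => f (S y) - f y
      _ ≤ ∫ y, dist y (S y) ∂ν := by
          refine integral_mono (hfSint.sub hfν).abs hSint fun z => ?_
          have := hfl.dist_le_mul (S z) z
          rw [Real.dist_eq] at this
          simpa [dist_comm] using this
      _ ≤ ε / 6 := hSbound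
    have hdiff : ∑ p ∈ P, f p * (a p - b p) = (∫ x, f (T x) ∂μ) - ∫ y, f (S y) ∂ν := by
      rw [hfT, hfS, ← Finset.sum_sub_distrib]
      exact Finset.sum_congr rfl fun p _ => by ring
    have hWmle : Wm ≤ |(∫ x, f x ∂μ) - ∫ x, f x ∂ν| + 3 * (ε / 6) := by
      have h1 : Wm - ε / 6 ≤ (∫ x, f (T x) ∂μ) - ∫ y, f (S y) ∂ν := by
        rw [← hdiff]; exact hfsum
      have h2 : (∫ x, f (T x) ∂μ) - ∫ y, f (S y) ∂ν
          ≤ ((∫ x, f x ∂μ) - ∫ x, f x ∂ν) + ε / 6 + ε / 6 := by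
        have e1 := abs_le.mp hclose1
        have e2 := abs_le.mp hclose2
        obtain ⟨e1a, e1b⟩ := e1
        obtain ⟨e2a, e2b⟩ := e2
        linarith
      have h3 : ((∫ x, f x ∂μ) - ∫ x, f x ∂ν) ≤ |(∫ x, f x ∂μ) - ∫ x, f x ∂ν| :=
        le_abs_self _
      linarith
    have hGf : |(∫ x, f x ∂μ) - ∫ x, f x ∂ν| ≤ ⨆ g, G g := by
      rw [← hGval f hfl]
      exact le_ciSup hbdd f
    calc wassersteinDist μ ν ≤ Wm + 3 * (ε / 6) := hWle
    _ ≤ |(∫ x, f x ∂μ) - ∫ x, f x ∂ν| + 3 * (ε / 6) + 3 * (ε / 6) := by linarith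
    _ ≤ (⨆ g, G g) + 3 * (ε / 6) + 3 * (ε / 6) := by linarith
    _ = (⨆ g, G g) + ε := by ring
  have hge : wassersteinDist μ ν ≤ ⨆ f, G f := le_of_forall_pos_le_add hle2
  exact le_antisymm hSup_le hge

end Main
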